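/- The function S₁(w) = S(w+1) satisfies the functional equation S₁(2w) = S₁(w) − 1 for every w ∈ ℍ; equivalently, S(2w + 1) = S(w + 1) − 1 for all w ∈ ℍ. -/

import Mathlib

/-- `e(w) = exp(2πiw)`. -/
noncomputable def e (w : ℂ) : ℂ := Complex.exp (2 * Real.pi * Complex.I * w)

/-- The Fredholm series `f(z) = ∑_{n=0}^∞ z^{2^n}`. -/
noncomputable def f (z : ℂ) : ℂ := ∑' n : ℕ, z ^ (2 ^ n)

/-- `F(w) = f(e(w)) = ∑_{n=0}^∞ e(2^n w)` on the upper half-plane. -/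
noncomputable def F (w : ℂ) : ℂ := ∑' n : ℕ, e ((2 ^ n : ℕ) * w)

/-- `G(w) = ∑_{l=1}^∞ e(−1/2^l)(e(w/2^l) − 1)` (indexing: `l = l' + 1`, `l' : ℕ`). -/
noncomputable def G (w : ℂ) : ℂ :=
  ∑' l : ℕ, e (-(1 / 2 ^ (l + 1))) * (e (w / 2 ^ (l + 1)) - 1)

/-- `S = F + G` on the upper half-plane. -/
noncomputable def S (w : ℂ) : ℂ := F w + G w

/-- The upper half-plane `ℍ = {w : ℂ | Im w > 0}`. -/
def UHP : Set ℂ := {w : ℂ | 0 < w.im}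

/-- `V = S(ℍ)`, the image of `S` on the upper half-plane. -/
noncomputable def V : Set ℂ := S '' UHP

lemma e_add (a b : ℂ) : e (a + b) = e a * e b := by
  unfold e; rw [mul_add, Complex.exp_add]

lemma abs_e (w : ℂ) : ‖e w‖ = Real.exp (-(2 * Real.pi * w.im)) := by
  unfold e
  rw [Complex.norm_exp]
  congr 1
  simp [Complex.mul_re, Complex.mul_im]

lemma e_nat (n : ℕ) : e (n : ℂ) = 1 := by
  unfold e
  rw [show (2 * (Real.pi : ℂ) * Complex.I * n) = (n : ℤ) * (2 * Real.pi * Complex.I) by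
    push_cast; ring]
  exact Complex.exp_int_mul_two_pi_mul_I n

lemma summable_F {w : ℂ} (hw : 0 < w.im) :
    Summable (fun n : ℕ => e ((2 ^ n : ℕ) * w)) := by
  have hr0 : (0 : ℝ) ≤ Real.exp (-(2 * Real.pi * w.im)) := (Real.exp_pos _).le
  have hr1 : Real.exp (-(2 * Real.pi * w.im)) < 1 := by
    rw [Real.exp_lt_one_iff]
    have : 0 < 2 * Real.pi * w.im := by positivity
    linarith
  apply Summable.of_norm_bounded (g := fun n : ℕ => Real.exp (-(2 * Real.pi * w.im)) ^ n)
    (summable_geometric_of_lt_one hr0 hr1)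
  intro n
  rw [abs_e]
  have him : (((2 ^ n : ℕ) : ℂ) * w).im = (2 ^ n : ℕ) * w.im := by
    rw [show (((2 ^ n : ℕ) : ℂ)) = (((2 ^ n : ℕ) : ℝ) : ℂ) by push_cast; ring,
      Complex.im_ofReal_mul]
  rw [him, show -(2 * Real.pi * ((2 ^ n : ℕ) * w.im))
      = ((2 ^ n : ℕ) : ℝ) * (-(2 * Real.pi * w.im)) by push_cast; ring]
  rw [show Real.exp (((2 ^ n : ℕ) : ℝ) * (-(2 * Real.pi * w.im)))
      = Real.exp (-(2 * Real.pi * w.im)) ^ (2 ^ n : ℕ) by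
    rw [← Real.exp_nat_mul]]
  exact pow_le_pow_of_le_one hr0 hr1.le (Nat.le_of_lt (Nat.lt_two_pow_self (n := n)))

lemma summable_G (w : ℂ) :
    Summable (fun l : ℕ => e (-(1 / 2 ^ (l + 1))) * (e (w / 2 ^ (l + 1)) - 1)) := by
  obtain ⟨N, hN⟩ := pow_unbounded_of_one_lt (2 * Real.pi * ‖w‖) (one_lt_two (α := ℝ))
  apply Summable.of_norm_bounded_eventually_nat
    (g := fun l => 2 * (2 * Real.pi * ‖w‖) * (1 / 2 : ℝ) ^ (l + 1))
  · apply Summable.mul_left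
    exact (summable_geometric_of_lt_one (by norm_num) (by norm_num)).comp_injective
      (add_left_injective 1)
  · filter_upwards [Filter.eventually_ge_atTop N] with l hl
    have h2l : (2 * Real.pi * ‖w‖) ≤ 2 ^ (l + 1) :=
      hN.le.trans (pow_le_pow_right₀ one_le_two (by omega))
    have habs1 : ‖e (-(1 / 2 ^ (l + 1) : ℂ))‖ = 1 := by
      rw [abs_e]
      have h : (-(1 / 2 ^ (l + 1) : ℂ)) = ((-(1 / 2 ^ (l + 1)) : ℝ) : ℂ) := by push_cast; ring
      rw [h, Complex.ofReal_im, mul_zero, neg_zero, Real.exp_zero]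
    have habsz : ‖2 * (Real.pi : ℂ) * Complex.I * (w / 2 ^ (l + 1))‖
        = (2 * Real.pi * ‖w‖) * (1 / 2 : ℝ) ^ (l + 1) := by
      rw [norm_mul, norm_div, norm_mul, norm_mul]
      simp [abs_of_nonneg Real.pi_pos.le, div_pow]
      ring
    have hz : ‖2 * (Real.pi : ℂ) * Complex.I * (w / 2 ^ (l + 1))‖ ≤ 1 := by
      rw [habsz, one_div, inv_pow, mul_inv_le_iff₀ (by positivity), one_mul]
      exact h2l
    calc ‖e (-(1 / 2 ^ (l + 1))) * (e (w / 2 ^ (l + 1)) - 1)‖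
        = ‖e (-(1 / 2 ^ (l + 1)))‖ * ‖e (w / 2 ^ (l + 1)) - 1‖ := by
          rw [norm_mul]
      _ = ‖e (w / 2 ^ (l + 1)) - 1‖ := by rw [habs1, one_mul]
      _ ≤ 2 * ‖2 * (Real.pi : ℂ) * Complex.I * (w / 2 ^ (l + 1))‖ :=
          Complex.norm_exp_sub_one_le hz
      _ = 2 * (2 * Real.pi * ‖w‖) * (1 / 2 : ℝ) ^ (l + 1) := by
          rw [habsz]; ring

/-- `S₁(w) = S(w+1)` satisfies `S₁(2w) = S₁(w) − 1`, i.e. `S(2w+1) = S(w+1) − 1` on `ℍ`. -/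
theorem S_one_functional_equation (w : ℂ) (hw : w ∈ UHP) :
    S (2 * w + 1) = S (w + 1) - 1 := by
  have hw' : 0 < w.im := hw
  -- F part
  have hFsum : Summable (fun n : ℕ => e ((2 ^ n : ℕ) * w)) := summable_F hw'
  have hF1 : F (w + 1) = F w := by
    unfold F
    apply tsum_congr
    intro n
    rw [show ((2 ^ n : ℕ) : ℂ) * (w + 1) = (2 ^ n : ℕ) * w + ((2 ^ n : ℕ) : ℂ) by ring,
      e_add, e_nat, mul_one]
  have hF2 : F (2 * w + 1) = F w - e ((2 ^ 0 : ℕ) * w) := by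
    unfold F
    have h1 : ∀ n : ℕ, e ((2 ^ n : ℕ) * (2 * w + 1)) = e ((2 ^ (n + 1) : ℕ) * w) := by
      intro n
      rw [show ((2 ^ n : ℕ) : ℂ) * (2 * w + 1)
          = ((2 ^ (n + 1) : ℕ) : ℂ) * w + ((2 ^ n : ℕ) : ℂ) by push_cast; ring,
        e_add, e_nat, mul_one]
    rw [tsum_congr h1]
    have := hFsum.tsum_eq_zero_add
    rw [this]
    ring
  -- G part
  have hGs1 := summable_G (2 * w + 1)
  have hGs2 := summable_G (w + 1)
  have hterm1 : ∀ l : ℕ, e (-(1 / 2 ^ (l + 1))) * (e ((2 * w + 1) / 2 ^ (l + 1)) - 1)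
      = e (w / 2 ^ l) - e (-(1 / 2 ^ (l + 1))) := by
    intro l
    rw [mul_sub, mul_one, ← e_add]
    congr 2
    have h2 : (2 : ℂ) ^ (l + 1) = 2 * 2 ^ l := by rw [pow_succ]; ring
    field_simp [h2]
    ring
  have hterm2 : ∀ l : ℕ, e (-(1 / 2 ^ (l + 1))) * (e ((w + 1) / 2 ^ (l + 1)) - 1)
      = e (w / 2 ^ (l + 1)) - e (-(1 / 2 ^ (l + 1))) := by
    intro l
    rw [mul_sub, mul_one, ← e_add]
    congr 2
    field_simp
    ring
  -- telescoping
  have hdsum : Summable (fun l : ℕ => e (w / 2 ^ l) - e (w / 2 ^ (l + 1))) := by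
    have := hGs1.sub hGs2
    refine this.congr fun l => ?_
    rw [hterm1 l, hterm2 l]
    ring
  have htel : ∑' l : ℕ, (e (w / 2 ^ l) - e (w / 2 ^ (l + 1))) = e w - 1 := by
    have hhs := hdsum.hasSum
    have htend := hhs.tendsto_sum_nat
    have hps : ∀ N : ℕ, ∑ l ∈ Finset.range N, (e (w / 2 ^ l) - e (w / 2 ^ (l + 1)))
        = e (w / 2 ^ 0) - e (w / 2 ^ N) :=
      fun N => Finset.sum_range_sub' (fun l => e (w / 2 ^ l)) N
    have hlim : Filter.Tendsto (fun N : ℕ => e (w / 2 ^ 0) - e (w / 2 ^ N))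
        Filter.atTop (nhds (e w - 1)) := by
      have h0 : Filter.Tendsto (fun N : ℕ => w / 2 ^ N) Filter.atTop (nhds 0) := by
        have : Filter.Tendsto (fun N : ℕ => ((2 : ℂ)⁻¹) ^ N) Filter.atTop (nhds 0) := by
          apply tendsto_pow_atTop_nhds_zero_of_norm_lt_one
          rw [norm_inv]
          norm_num
        have := this.const_mul w
        rw [mul_zero] at this
        refine this.congr fun N => ?_
        rw [div_eq_mul_inv, inv_pow]
      have hexp : Filter.Tendsto (fun N : ℕ => e (w / 2 ^ N)) Filter.atTop (nhds 1) := by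
        have hc : Continuous e := by
          unfold e
          exact Complex.continuous_exp.comp (continuous_const.mul continuous_id)
        have := (hc.tendsto 0).comp h0
        simpa [e, Function.comp_def] using this
      have := (tendsto_const_nhds (x := e (w / 2 ^ 0))).sub hexp
      simpa [pow_zero, div_one] using this
    have htend' := htend.congr fun N => (hps N)
    exact tendsto_nhds_unique htend' hlim
  have hG : G (2 * w + 1) - G (w + 1) = e w - 1 := by
    unfold G
    rw [← Summable.tsum_sub hGs1 hGs2]
    rw [← htel]
    apply tsum_congr
    intro l
    rw [hterm1 l, hterm2 l]
    ring
  -- combine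
  have he0 : e ((2 ^ 0 : ℕ) * w) = e w := by norm_num
  unfold S
  rw [hF1, hF2, he0]
  have hG' : G (2 * w + 1) = G (w + 1) + (e w - 1) := by linear_combination hG
  rw [hG']
  ring
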